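/- If a twice continuously differentiable function f: ℝ^{n×n} → ℝ satisfies δ-RIP_{2r}, then it satisfies 4δ-BDP_{2r}; that is, |[∇²f(M) - ∇²f(M')](K,L)| ≤ 4δ‖K‖_F‖L‖_F for all matrices M, M', K, L of rank at most 2r. -/

import Mathlib

noncomputable def frob {m n : Type*} [Fintype m] [Fintype n] (A : Matrix m n ℝ) : ℝ :=
  Real.sqrt (∑ i, ∑ j, (A i j)^2)

attribute [local instance] Matrix.normedAddCommGroup Matrix.normedSpace

/-- The Hessian of `f` at `M`, as a bilinear form applied to `(K, L)`. -/
noncomputable def Hess {n : ℕ} (f : Matrix (Fin n) (Fin n) ℝ → ℝ)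
    (M K L : Matrix (Fin n) (Fin n) ℝ) : ℝ :=
  iteratedFDeriv ℝ 2 f M ![K, L]

open Matrix

section Aux

lemma frob_nonneg' {m n : Type*} [Fintype m] [Fintype n] (A : Matrix m n ℝ) : 0 ≤ frob A :=
  Real.sqrt_nonneg _

lemma frob_sq' {m n : Type*} [Fintype m] [Fintype n] (A : Matrix m n ℝ) :
    frob A ^ 2 = ∑ i, ∑ j, (A i j)^2 := Real.sq_sqrt (by positivity)

lemma frob_eq_zero' {m n : Type*} [Fintype m] [Fintype n] {A : Matrix m n ℝ}
    (h : frob A = 0) : A = 0 := by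
  have h2 : ∑ i, ∑ j, (A i j)^2 = 0 := by
    have := frob_sq' A; rw [h] at this; linarith
  ext i j
  have hi := (Finset.sum_eq_zero_iff_of_nonneg (fun i _ => by positivity)).1 h2 i (Finset.mem_univ i)
  have hj := (Finset.sum_eq_zero_iff_of_nonneg (fun j _ => by positivity)).1 hi j (Finset.mem_univ j)
  simpa using pow_eq_zero_iff (n := 2) (by norm_num) |>.1 hj

lemma frob_smul' {m n : Type*} [Fintype m] [Fintype n] (c : ℝ) (A : Matrix m n ℝ) :
    frob (c • A) = |c| * frob A := by
  unfold frob
  rw [← Real.sqrt_sq_eq_abs, ← Real.sqrt_mul (by positivity), Finset.mul_sum]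
  congr 1
  refine Finset.sum_congr rfl fun i _ => ?_
  rw [Finset.mul_sum]
  refine Finset.sum_congr rfl fun j _ => ?_
  simp [Matrix.smul_apply, smul_eq_mul]; ring

lemma frob_sq_add' {m n : Type*} [Fintype m] [Fintype n] (A B : Matrix m n ℝ)
    (h : ∑ i, ∑ j, A i j * B i j = 0) : frob (A + B) ^ 2 = frob A ^ 2 + frob B ^ 2 := by
  simp only [frob_sq', Matrix.add_apply]
  have e1 : ∑ i, ∑ j, (A i j + B i j)^2
      = ∑ i, ∑ j, ((A i j)^2 + (B i j)^2 + 2*(A i j * B i j)) := by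
    refine Finset.sum_congr rfl fun i _ => Finset.sum_congr rfl fun j _ => by ring
  rw [e1]
  simp only [Finset.sum_add_distrib, ← Finset.mul_sum]
  rw [h]; ring

lemma rank_add_le' {n : ℕ} (A B : Matrix (Fin n) (Fin n) ℝ) :
    (A + B).rank ≤ A.rank + B.rank := by
  rw [Matrix.rank, Matrix.rank, Matrix.rank]
  have h : (A + B).mulVecLin = A.mulVecLin + B.mulVecLin := by
    ext x i; simp [Matrix.mulVecLin, Matrix.add_mulVec]
  rw [h]
  have h1 := LinearMap.rank_add_le A.mulVecLin B.mulVecLin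
  have hA := Module.rank_lt_aleph0 ℝ (LinearMap.range A.mulVecLin)
  have hB := Module.rank_lt_aleph0 ℝ (LinearMap.range B.mulVecLin)
  have h2 : Cardinal.toNat (LinearMap.rank (A.mulVecLin + B.mulVecLin)) ≤
      Cardinal.toNat (LinearMap.rank A.mulVecLin + LinearMap.rank B.mulVecLin) :=
    Cardinal.toNat_le_toNat h1 (Cardinal.add_lt_aleph0 hA hB)
  rw [Cardinal.toNat_add hA hB] at h2
  exact h2

lemma rank_smul_le' {n : ℕ} (c : ℝ) (A : Matrix (Fin n) (Fin n) ℝ) :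
    (c • A).rank ≤ A.rank := by
  rw [show c • A = (c • (1 : Matrix (Fin n) (Fin n) ℝ)) * A by rw [Matrix.smul_mul, one_mul]]
  exact Matrix.rank_mul_le_right _ _

lemma vecMulVec_mul_vecMulVec' {n : ℕ} (a b c d : Fin n → ℝ) :
    Matrix.vecMulVec a b * Matrix.vecMulVec c d = (b ⬝ᵥ c) • Matrix.vecMulVec a d := by
  ext x y
  simp only [Matrix.mul_apply, Matrix.vecMulVec_apply, Matrix.smul_apply, dotProduct,
    smul_eq_mul, Finset.sum_mul]
  exact Finset.sum_congr rfl fun k _ => by ring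

lemma vecMulVec_transpose' {n : ℕ} (a b : Fin n → ℝ) :
    (Matrix.vecMulVec a b)ᵀ = Matrix.vecMulVec b a := by
  ext x y; simp [Matrix.vecMulVec_apply, mul_comm]

lemma rank_vecMulVec_le' {n : ℕ} (w v : Fin n → ℝ) :
    (Matrix.vecMulVec w v).rank ≤ 1 := by
  rw [Matrix.vecMulVec_eq (Fin 1)]
  calc (Matrix.replicateCol (Fin 1) w * Matrix.replicateRow (Fin 1) v).rank
      ≤ (Matrix.replicateCol (Fin 1) w).rank := Matrix.rank_mul_le_left _ _
    _ ≤ Fintype.card (Fin 1) := Matrix.rank_le_card_width _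
    _ = 1 := by simp

lemma rank_sum_vecMulVec_le' {n d : ℕ} (u : Fin d → Fin n → ℝ) (s : Finset (Fin d)) :
    (∑ i ∈ s, Matrix.vecMulVec (u i) (u i)).rank ≤ s.card := by
  classical
  induction s using Finset.induction with
  | empty => simp
  | insert a s' h ih =>
    rw [Finset.sum_insert h, Finset.card_insert_of_notMem h]
    calc (Matrix.vecMulVec (u a) (u a) + ∑ i ∈ s', Matrix.vecMulVec (u i) (u i)).rank
        ≤ (Matrix.vecMulVec (u a) (u a)).rank + (∑ i ∈ s', Matrix.vecMulVec (u i) (u i)).rank :=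
          rank_add_le' _ _
      _ ≤ 1 + s'.card := add_le_add (rank_vecMulVec_le' _ _) ih
      _ = s'.card + 1 := by omega

lemma exists_split' {n r : ℕ} (K : Matrix (Fin n) (Fin n) ℝ) (hK : K.rank ≤ 2 * r) :
    ∃ K1 K2 : Matrix (Fin n) (Fin n) ℝ, K = K1 + K2 ∧ K1.rank ≤ r ∧ K2.rank ≤ r ∧
      ∑ i, ∑ j, K1 i j * K2 i j = 0 := by
  classical
  let e : (Fin n → ℝ) ≃ₗ[ℝ] EuclideanSpace ℝ (Fin n) := (WithLp.linearEquiv 2 ℝ (Fin n → ℝ)).symm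
  let T : EuclideanSpace ℝ (Fin n) →ₗ[ℝ] EuclideanSpace ℝ (Fin n) :=
    e.toLinearMap ∘ₗ K.mulVecLin ∘ₗ e.symm.toLinearMap
  let V : Submodule ℝ (EuclideanSpace ℝ (Fin n)) := LinearMap.range T
  have hVrank : Module.finrank ℝ V = K.rank := by
    have h1 : V = Submodule.map (e : (Fin n → ℝ) →ₗ[ℝ] EuclideanSpace ℝ (Fin n))
        (LinearMap.range K.mulVecLin) := by
      show LinearMap.range _ = _
      rw [LinearMap.range_comp, LinearMap.range_comp, LinearEquiv.range, Submodule.map_top]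
    rw [h1, LinearEquiv.finrank_map_eq]
    rfl
  set d := Module.finrank ℝ V with hd
  have hd2r : d ≤ 2 * r := by rw [hVrank]; exact hK
  let b := stdOrthonormalBasis ℝ V
  let u : Fin d → (Fin n → ℝ) := fun i => e.symm ((b i : EuclideanSpace ℝ (Fin n)))
  have huu : ∀ i j, u i ⬝ᵥ u j = if i = j then 1 else 0 := by
    intro i j
    have hb := b.orthonormal
    rw [orthonormal_iff_ite] at hb
    have h1 : (inner ℝ ((b i : EuclideanSpace ℝ (Fin n))) ((b j : EuclideanSpace ℝ (Fin n))) : ℝ)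
        = if i = j then 1 else 0 := by
      rw [← Submodule.coe_inner]; exact hb i j
    have h2 : (inner ℝ ((b i : EuclideanSpace ℝ (Fin n))) ((b j : EuclideanSpace ℝ (Fin n))) : ℝ)
        = ∑ k, (b i : EuclideanSpace ℝ (Fin n)) k * (b j : EuclideanSpace ℝ (Fin n)) k := by
      simp [PiLp.inner_apply, RCLike.inner_apply, starRingEnd_apply]
      exact Finset.sum_congr rfl fun k _ => mul_comm _ _
    rw [← h1, h2]
    rfl
  have hexp : ∀ x : Fin n → ℝ, x ∈ LinearMap.range K.mulVecLin →
      ∑ i, (u i ⬝ᵥ x) • u i = x := by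
    intro x hx
    obtain ⟨z, hz⟩ := hx
    have hmem : e x ∈ V := ⟨e z, by simp [T, hz]⟩
    set y : V := ⟨e x, hmem⟩ with hy
    have h2 := b.sum_repr' y
    have h3 : ∑ i, (inner ℝ ((b i : EuclideanSpace ℝ (Fin n))) (e x) : ℝ)
        • ((b i : EuclideanSpace ℝ (Fin n))) = e x := by
      have := congrArg (Subtype.val) h2
      simpa [Submodule.coe_inner] using this
    have h4 : ∀ i, (inner ℝ ((b i : EuclideanSpace ℝ (Fin n))) (e x) : ℝ) = u i ⬝ᵥ x := by
      intro i
      have h5 : (inner ℝ ((b i : EuclideanSpace ℝ (Fin n))) (e x) : ℝ)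
          = ∑ k, (b i : EuclideanSpace ℝ (Fin n)) k * (e x) k := by
        simp [PiLp.inner_apply, RCLike.inner_apply, starRingEnd_apply]
        exact Finset.sum_congr rfl fun k _ => mul_comm _ _
      rw [h5]
      rfl
    calc ∑ i, (u i ⬝ᵥ x) • u i
        = e.symm (∑ i, (inner ℝ ((b i : EuclideanSpace ℝ (Fin n))) (e x) : ℝ)
            • ((b i : EuclideanSpace ℝ (Fin n)))) := by
          rw [map_sum]
          refine Finset.sum_congr rfl fun i _ => ?_
          rw [_root_.map_smul, h4]
      _ = x := by rw [h3]; exact e.symm_apply_apply x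
  -- now build the matrices
  let S : Finset (Fin d) := Finset.univ.filter (fun i => (i : ℕ) < r)
  let P1 : Matrix (Fin n) (Fin n) ℝ := ∑ i ∈ S, Matrix.vecMulVec (u i) (u i)
  let P2 : Matrix (Fin n) (Fin n) ℝ := ∑ i ∈ Sᶜ, Matrix.vecMulVec (u i) (u i)
  have hentry : ∀ (w : Fin n → ℝ) (a j : Fin n),
      (Matrix.vecMulVec w w * K) a j = (w ⬝ᵥ (fun c => K c j)) * w a := by
    intro w a j
    simp only [Matrix.mul_apply, Matrix.vecMulVec_apply, dotProduct, Finset.sum_mul]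
    exact Finset.sum_congr rfl fun c _ => by ring
  refine ⟨P1 * K, P2 * K, ?_, ?_, ?_, ?_⟩
  · -- K = P1 * K + P2 * K
    rw [← Matrix.add_mul]
    have hP : P1 + P2 = ∑ i : Fin d, Matrix.vecMulVec (u i) (u i) :=
      Finset.sum_add_sum_compl S _
    rw [hP]
    ext a j
    have hcol : (fun c => K c j) ∈ LinearMap.range K.mulVecLin := by
      refine ⟨Pi.single j 1, ?_⟩
      show K.mulVec (Pi.single j 1) = _
      rw [Matrix.mulVec_single]
      simp
      rfl
    have h6 := congrFun (hexp (fun c => K c j) hcol) a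
    simp only [Finset.sum_apply, Pi.smul_apply, smul_eq_mul] at h6
    rw [← h6, Matrix.sum_mul, Matrix.sum_apply]
    exact Finset.sum_congr rfl fun i _ => (hentry (u i) a j).symm ▸ (hentry (u i) a j).trans rfl
  · -- rank bound 1
    refine le_trans (Matrix.rank_mul_le_left P1 K) (le_trans (rank_sum_vecMulVec_le' u S) ?_)
    have hf : ∀ a ∈ S, (a : ℕ) ∈ Finset.range r := fun a ha => by
      simp only [S, Finset.mem_filter] at ha
      simpa [Finset.mem_range] using ha.2
    have := Finset.card_le_card_of_injOn (s := S) (t := Finset.range r)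
      (fun i => (i : ℕ)) hf (fun a _ b _ h => Fin.val_injective h)
    simpa [Finset.card_range] using this
  · -- rank bound 2
    refine le_trans (Matrix.rank_mul_le_left P2 K) (le_trans (rank_sum_vecMulVec_le' u Sᶜ) ?_)
    have hcompl : Sᶜ.card = d - S.card := by rw [Finset.card_compl]; simp
    by_cases hrd : r ≤ d
    · have hr : r ≤ S.card := by
        have := Finset.card_le_card_of_injOn
          (fun j : Fin r => (⟨j.1, lt_of_lt_of_le j.2 hrd⟩ : Fin d))
          (s := Finset.univ) (t := S)
          (fun a _ => by
            simp only [S, Finset.coe_filter, Finset.mem_univ, true_and, Set.mem_setOf_eq]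
            exact a.2)
          (fun a _ b _ h => by
            apply Fin.val_injective
            simpa using congrArg Fin.val h)
        simpa using this
      omega
    · omega
  · -- orthogonality
    have hP12 : P1 * P2 = 0 := by
      rw [Finset.sum_mul_sum]
      apply Finset.sum_eq_zero
      intro i hi
      apply Finset.sum_eq_zero
      intro j hj
      rw [vecMulVec_mul_vecMulVec', huu]
      have hij : i ≠ j := fun h => (Finset.mem_compl.1 hj) (h ▸ hi)
      simp [hij]
    have hP1T : P1ᵀ = P1 := by
      show (∑ i ∈ S, Matrix.vecMulVec (u i) (u i))ᵀ = _
      rw [Matrix.transpose_sum]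
      exact Finset.sum_congr rfl fun i _ => vecMulVec_transpose' (u i) (u i)
    have hT : (P1 * K)ᵀ * (P2 * K) = 0 := by
      rw [Matrix.transpose_mul, hP1T, Matrix.mul_assoc Kᵀ P1 (P2 * K),
        ← Matrix.mul_assoc P1 P2 K, hP12, Matrix.zero_mul, Matrix.mul_zero]
    have htr : ∑ i, ∑ j, (P1 * K) i j * (P2 * K) i j
        = ∑ j, ((P1 * K)ᵀ * (P2 * K)) j j := by
      rw [Finset.sum_comm]
      refine Finset.sum_congr rfl fun j _ => ?_
      rw [Matrix.mul_apply]
      exact Finset.sum_congr rfl fun x _ => by rw [Matrix.transpose_apply]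
    rw [htr, hT]
    simp

lemma hess_eq' {n : ℕ} (f : Matrix (Fin n) (Fin n) ℝ → ℝ) (M K L : Matrix (Fin n) (Fin n) ℝ) :
    Hess f M K L = fderiv ℝ (fderiv ℝ f) M K L := by
  rw [Hess, iteratedFDeriv_two_apply]
  simp
  rfl

end Aux

theorem stmt_2 {n r : ℕ} (δ : ℝ) (hδ0 : 0 ≤ δ) (hδ1 : δ < 1)
    (f : Matrix (Fin n) (Fin n) ℝ → ℝ) (hf : ContDiff ℝ 2 f)
    (hRIP : ∀ M K : Matrix (Fin n) (Fin n) ℝ, M.rank ≤ 2 * r → K.rank ≤ 2 * r →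
      (1 - δ) * frob K ^ 2 ≤ Hess f M K K ∧ Hess f M K K ≤ (1 + δ) * frob K ^ 2)
    (M M' K L : Matrix (Fin n) (Fin n) ℝ)
    (hM : M.rank ≤ 2 * r) (hM' : M'.rank ≤ 2 * r)
    (hK : K.rank ≤ 2 * r) (hL : L.rank ≤ 2 * r) :
    |Hess f M K L - Hess f M' K L| ≤ 4 * δ * frob K * frob L := by
  classical
  have hsymm : ∀ (N X Y : Matrix (Fin n) (Fin n) ℝ), Hess f N X Y = Hess f N Y X := by
    intro N X Y
    rw [hess_eq', hess_eq']
    exact hf.contDiffAt.isSymmSndFDerivAt (by simp) X Y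
  -- diagonal difference bound
  have hB2 : ∀ X : Matrix (Fin n) (Fin n) ℝ, X.rank ≤ 2 * r →
      |Hess f M X X - Hess f M' X X| ≤ 2 * δ * frob X ^ 2 := by
    intro X hX
    obtain ⟨h1, h2⟩ := hRIP M X hM hX
    obtain ⟨h3, h4⟩ := hRIP M' X hM' hX
    rw [abs_sub_le_iff]
    constructor <;> nlinarith
  -- polarization bound for rank ≤ r pieces
  have key : ∀ X Y : Matrix (Fin n) (Fin n) ℝ, X.rank ≤ r → Y.rank ≤ r →
      |Hess f M X Y - Hess f M' X Y| ≤ δ * (frob X ^ 2 + frob Y ^ 2) := by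
    intro X Y hX hY
    have hXY : (X + Y).rank ≤ 2 * r := le_trans (rank_add_le' X Y) (by omega)
    have hXY' : (X - Y).rank ≤ 2 * r := by
      have hsub : X - Y = X + (-1 : ℝ) • Y := by
        ext i j; simp [Matrix.sub_apply, Matrix.add_apply]; ring
      rw [hsub]
      have h5 := rank_smul_le' (-1 : ℝ) Y
      exact le_trans (rank_add_le' _ _) (by omega)
    have e1 := hB2 (X + Y) hXY
    have e2 := hB2 (X - Y) hXY'
    have par : frob (X + Y) ^ 2 + frob (X - Y) ^ 2 = 2 * frob X ^ 2 + 2 * frob Y ^ 2 := by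
      simp only [frob_sq']
      rw [← Finset.sum_add_distrib]
      have e3 : ∀ i : Fin n, (∑ j, ((X + Y) i j)^2 + ∑ j, ((X - Y) i j)^2)
          = ∑ j, (2 * (X i j)^2 + 2 * (Y i j)^2) := by
        intro i
        rw [← Finset.sum_add_distrib]
        refine Finset.sum_congr rfl fun j _ => ?_
        simp only [Matrix.add_apply, Matrix.sub_apply]; ring
      rw [Finset.sum_congr rfl fun i _ => e3 i]
      simp only [Finset.sum_add_distrib, ← Finset.mul_sum]
      try ring
    have expand : ∀ N, Hess f N (X + Y) (X + Y) - Hess f N (X - Y) (X - Y)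
        = 2 * Hess f N X Y + 2 * Hess f N Y X := by
      intro N
      simp only [hess_eq', map_add, map_sub, ContinuousLinearMap.add_apply,
        ContinuousLinearMap.sub_apply]
      ring
    have h4 : 4 * (Hess f M X Y - Hess f M' X Y)
        = (Hess f M (X + Y) (X + Y) - Hess f M' (X + Y) (X + Y))
          - (Hess f M (X - Y) (X - Y) - Hess f M' (X - Y) (X - Y)) := by
      have eM := expand M
      have eM' := expand M'
      have sM := hsymm M X Y
      have sM' := hsymm M' X Y
      linarith
    have h5 : |4 * (Hess f M X Y - Hess f M' X Y)|
        ≤ 2 * δ * frob (X + Y) ^ 2 + 2 * δ * frob (X - Y) ^ 2 := by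
      rw [h4]
      exact le_trans (abs_sub _ _) (add_le_add e1 e2)
    rw [abs_mul, abs_of_nonneg (by norm_num : (0:ℝ) ≤ 4)] at h5
    have h6 : 2 * δ * frob (X + Y) ^ 2 + 2 * δ * frob (X - Y) ^ 2
        = 4 * (δ * (frob X ^ 2 + frob Y ^ 2)) := by
      have := par
      nlinarith [par]
    linarith
  -- bound for rank ≤ 2r via splitting
  have main : ∀ X Y : Matrix (Fin n) (Fin n) ℝ, X.rank ≤ 2 * r → Y.rank ≤ 2 * r →
      |Hess f M X Y - Hess f M' X Y| ≤ 2 * δ * (frob X ^ 2 + frob Y ^ 2) := by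
    intro X Y hX hY
    obtain ⟨X1, X2, hXe, hX1, hX2, hXo⟩ := exists_split' X hX
    obtain ⟨Y1, Y2, hYe, hY1, hY2, hYo⟩ := exists_split' Y hY
    have hbil : ∀ N, Hess f N X Y =
        Hess f N X1 Y1 + Hess f N X1 Y2 + Hess f N X2 Y1 + Hess f N X2 Y2 := by
      intro N
      rw [hXe, hYe]
      simp only [hess_eq', map_add, ContinuousLinearMap.add_apply]
      ring
    have q1 : frob X ^ 2 = frob X1 ^ 2 + frob X2 ^ 2 := by
      rw [hXe]; exact frob_sq_add' X1 X2 hXo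
    have q2 : frob Y ^ 2 = frob Y1 ^ 2 + frob Y2 ^ 2 := by
      rw [hYe]; exact frob_sq_add' Y1 Y2 hYo
    have k11 := key X1 Y1 hX1 hY1
    have k12 := key X1 Y2 hX1 hY2
    have k21 := key X2 Y1 hX2 hY1
    have k22 := key X2 Y2 hX2 hY2
    have habs : |Hess f M X Y - Hess f M' X Y|
        ≤ |Hess f M X1 Y1 - Hess f M' X1 Y1| + |Hess f M X1 Y2 - Hess f M' X1 Y2|
          + |Hess f M X2 Y1 - Hess f M' X2 Y1| + |Hess f M X2 Y2 - Hess f M' X2 Y2| := by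
      rw [hbil M, hbil M']
      calc |Hess f M X1 Y1 + Hess f M X1 Y2 + Hess f M X2 Y1 + Hess f M X2 Y2
            - (Hess f M' X1 Y1 + Hess f M' X1 Y2 + Hess f M' X2 Y1 + Hess f M' X2 Y2)|
          = |(Hess f M X1 Y1 - Hess f M' X1 Y1) + (Hess f M X1 Y2 - Hess f M' X1 Y2)
            + (Hess f M X2 Y1 - Hess f M' X2 Y1) + (Hess f M X2 Y2 - Hess f M' X2 Y2)| := by
            ring_nf
        _ ≤ _ := by
            refine le_trans (abs_add_le _ _) (add_le_add (le_trans (abs_add_le _ _)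
              (add_le_add (abs_add_le _ _) le_rfl)) le_rfl)
    have hsum : δ * (frob X1 ^ 2 + frob Y1 ^ 2) + δ * (frob X1 ^ 2 + frob Y2 ^ 2)
        + δ * (frob X2 ^ 2 + frob Y1 ^ 2) + δ * (frob X2 ^ 2 + frob Y2 ^ 2)
        = 2 * δ * ((frob X1 ^ 2 + frob X2 ^ 2) + (frob Y1 ^ 2 + frob Y2 ^ 2)) := by ring
    rw [q1, q2]
    linarith
  -- final normalization
  rcases eq_or_lt_of_le (frob_nonneg' K) with hK0 | hK0
  · have hKz : K = 0 := frob_eq_zero' hK0.symm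
    subst hKz
    have hz : ∀ N, Hess f N (0 : Matrix (Fin n) (Fin n) ℝ) L = 0 := by
      intro N; rw [hess_eq']; simp
    rw [hz M, hz M']
    simp [← hK0]
  rcases eq_or_lt_of_le (frob_nonneg' L) with hL0 | hL0
  · have hLz : L = 0 := frob_eq_zero' hL0.symm
    subst hLz
    have hz : ∀ N, Hess f N K (0 : Matrix (Fin n) (Fin n) ℝ) = 0 := by
      intro N; rw [hess_eq']; simp
    rw [hz M, hz M']
    simp [← hL0]
  · set a := frob K with ha
    set b := frob L with hb
    have hKs : ((a⁻¹) • K).rank ≤ 2 * r := le_trans (rank_smul_le' _ _) hK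
    have hLs : ((b⁻¹) • L).rank ≤ 2 * r := le_trans (rank_smul_le' _ _) hL
    have h1 := main ((a⁻¹) • K) ((b⁻¹) • L) hKs hLs
    have hfa : frob ((a⁻¹) • K) = 1 := by
      rw [frob_smul', abs_of_pos (inv_pos.2 hK0), ← ha]
      field_simp
    have hfb : frob ((b⁻¹) • L) = 1 := by
      rw [frob_smul', abs_of_pos (inv_pos.2 hL0), ← hb]
      field_simp
    have hsc : ∀ N, Hess f N ((a⁻¹) • K) ((b⁻¹) • L) = a⁻¹ * (b⁻¹ * Hess f N K L) := by
      intro N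
      simp only [hess_eq', _root_.map_smul, ContinuousLinearMap.smul_apply, smul_eq_mul]
      ring
    rw [hfa, hfb, hsc M, hsc M'] at h1
    have h2 : a⁻¹ * (b⁻¹ * Hess f M K L) - a⁻¹ * (b⁻¹ * Hess f M' K L)
        = a⁻¹ * b⁻¹ * (Hess f M K L - Hess f M' K L) := by ring
    rw [h2, abs_mul, abs_of_pos (by positivity : (0:ℝ) < a⁻¹ * b⁻¹)] at h1
    have h3 : 2 * δ * (1 ^ 2 + 1 ^ 2) = 4 * δ := by ring
    rw [h3] at h1
    have h4 : |Hess f M K L - Hess f M' K L| ≤ 4 * δ * a * b := by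
      have := mul_le_mul_of_nonneg_left h1 (le_of_lt (by positivity : (0:ℝ) < a * b))
      calc |Hess f M K L - Hess f M' K L|
          = (a * b) * (a⁻¹ * b⁻¹ * |Hess f M K L - Hess f M' K L|) := by
            field_simp
        _ ≤ (a * b) * (4 * δ) := this
        _ = 4 * δ * a * b := by ring
    exact h4
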